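/- Let 1/2 < H < 1 and let u, v ∈ ℝ with u ≠ v. Then ∫_{-∞}^{min(u,v)} (u-x)^{H-3/2}·(v-x)^{H-3/2} dx = B(H-1/2, 2-2H) · |u-v|^{2H-2}. -/

import Mathlib

open MeasureTheory Set

/-- The Euler Beta function `B(a,b) = Γ(a)Γ(b)/Γ(a+b)`. -/
noncomputable def eulerBeta (a b : ℝ) : ℝ := Real.Gamma a * Real.Gamma b / Real.Gamma (a + b)

lemma real_beta {a b : ℝ} (ha : 0 < a) (hb : 0 < b) :
    ∫ x in (0:ℝ)..1, x ^ (a - 1) * (1 - x) ^ (b - 1) = eulerBeta a b := by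
  have key := Complex.Gamma_mul_Gamma_eq_betaIntegral
    (s := (a : ℂ)) (t := (b : ℂ)) (by simpa using ha) (by simpa using hb)
  have hbeta : Complex.betaIntegral a b
      = ((∫ x in (0:ℝ)..1, x ^ (a - 1) * (1 - x) ^ (b - 1) : ℝ) : ℂ) := by
    rw [Complex.betaIntegral, ← intervalIntegral.integral_ofReal]
    refine intervalIntegral.integral_congr fun x hx => ?_
    rw [uIcc_of_le (by norm_num : (0:ℝ) ≤ 1)] at hx
    push_cast
    rw [Complex.ofReal_cpow hx.1, Complex.ofReal_cpow (by linarith [hx.2])]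
    push_cast
    ring
  rw [hbeta, ← Complex.ofReal_add, Complex.Gamma_ofReal, Complex.Gamma_ofReal,
    Complex.Gamma_ofReal, ← Complex.ofReal_mul, ← Complex.ofReal_mul] at key
  have hreal : Real.Gamma a * Real.Gamma b
      = Real.Gamma (a + b) * ∫ x in (0:ℝ)..1, x ^ (a - 1) * (1 - x) ^ (b - 1) :=
    Complex.ofReal_injective key
  have hG : Real.Gamma (a + b) ≠ 0 := (Real.Gamma_pos_of_pos (by linarith)).ne'
  rw [eulerBeta, hreal]
  field_simp

lemma stmt7_aux (H c : ℝ) (hH : H ∈ Ioo (1 / 2 : ℝ) 1) (hc : 0 < c) :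
    (∫ x in Iio (0:ℝ), (0 - x) ^ (H - 3 / 2) * (c - x) ^ (H - 3 / 2))
      = eulerBeta (H - 1 / 2) (2 - 2 * H) * c ^ (2 * H - 2) := by
  obtain ⟨h1, h2⟩ := hH
  set φ : ℝ → ℝ := fun s => -(c * s / (1 - s)) with hφ
  have himg : φ '' Ioo 0 1 = Iio (0:ℝ) := by
    ext y
    constructor
    · rintro ⟨s, ⟨hs0, hs1⟩, rfl⟩
      have : 0 < c * s / (1 - s) := by
        apply div_pos (by positivity); linarith
      simpa [hφ] using this
    · intro hy
      have hy' : 0 < -y := by simpa using hy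
      have hd : (0:ℝ) < -y + c := by linarith
      refine ⟨(-y) / (-y + c), ⟨div_pos hy' hd, ?_⟩, ?_⟩
      · rw [div_lt_one hd]; linarith
      · have h1s : 1 - (-y) / (-y + c) = c / (-y + c) := by
          field_simp
          ring
        simp only [hφ, h1s]
        have hcne := hc.ne'
        have hdne := hd.ne'
        field_simp
  have hderiv : ∀ s ∈ Ioo (0:ℝ) 1, HasDerivWithinAt φ (-(c / (1 - s) ^ 2)) (Ioo 0 1) s := by
    intro s hs
    have hs1 : 1 - s ≠ 0 := by have := hs.2; intro h; linarith [sub_eq_zero.mp h]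
    have h := (((hasDerivAt_id s).const_mul c).div ((hasDerivAt_id s).const_sub 1) hs1).neg
    simp only [id_eq, mul_one] at h
    have h' : HasDerivAt φ (-(c / (1 - s) ^ 2)) s := by
      exact h.congr_deriv (by ring)
    exact h'.hasDerivWithinAt
  have hinj : InjOn φ (Ioo 0 1) := by
    intro s hs t ht h
    have hs1 : (0:ℝ) < 1 - s := by linarith [hs.2]
    have ht1 : (0:ℝ) < 1 - t := by linarith [ht.2]
    simp only [hφ, neg_inj] at h
    field_simp at h
    nlinarith [h]
  have key := integral_image_eq_integral_abs_deriv_smul measurableSet_Ioo hderiv hinj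
    (fun x => (0 - x) ^ (H - 3 / 2) * (c - x) ^ (H - 3 / 2))
  rw [himg] at key
  rw [key]
  have hint : ∀ s ∈ Ioo (0:ℝ) 1,
      |(-(c / (1 - s) ^ 2))| • ((0 - φ s) ^ (H - 3 / 2) * (c - φ s) ^ (H - 3 / 2))
        = c ^ (2 * H - 2) * (s ^ (H - 1 / 2 - 1) * (1 - s) ^ (2 - 2 * H - 1)) := by
    intro s ⟨hs0, hs1⟩
    have h1s : (0:ℝ) < 1 - s := by linarith
    have hA : 0 - φ s = c * s / (1 - s) := by simp [hφ]
    have hB : c - φ s = c / (1 - s) := by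
      simp only [hφ, sub_neg_eq_add]
      field_simp
      ring
    rw [hA, hB, abs_neg, abs_of_pos (by positivity), smul_eq_mul]
    rw [Real.div_rpow (by positivity) h1s.le, Real.div_rpow hc.le h1s.le,
      Real.mul_rpow hc.le hs0.le]
    have ec : c ^ (2 * H - 2) = c * c ^ (H - 3/2) * c ^ (H - 3/2) := by
      rw [show (2*H-2:ℝ) = ((H-3/2) + (H-3/2)) + 1 by ring, Real.rpow_add_one hc.ne',
        Real.rpow_add hc]
      ring
    have e2 : (1 - s) ^ (2*H-1) = (1-s)^2 * ((1-s)^(H-3/2) * (1-s)^(H-3/2)) := by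
      rw [show (2*H-1:ℝ) = ((2:ℕ):ℝ) + ((H-3/2)+(H-3/2)) by push_cast; ring,
        Real.rpow_add h1s, Real.rpow_add h1s, Real.rpow_natCast]
    have e3 : (1 - s) ^ (2 - 2*H - 1) = ((1-s) ^ (2*H-1))⁻¹ := by
      rw [show (2 - 2*H - 1:ℝ) = -(2*H-1) by ring, Real.rpow_neg h1s.le]
    rw [e3, e2, ec, show (H - 1/2 - 1 : ℝ) = H - 3/2 by ring]
    have hne : ((1:ℝ)-s)^(H-3/2) ≠ 0 := (Real.rpow_pos_of_pos h1s _).ne'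
    field_simp
  rw [setIntegral_congr_fun measurableSet_Ioo hint, MeasureTheory.integral_const_mul]
  rw [← real_beta (a := H - 1/2) (b := 2 - 2 * H) (by linarith) (by linarith)]
  rw [intervalIntegral.integral_of_le (by norm_num : (0:ℝ) ≤ 1),
    ← integral_Ioc_eq_integral_Ioo]
  rw [mul_comm]

theorem stmt7 (H u v : ℝ) (hH : H ∈ Ioo (1 / 2 : ℝ) 1) (huv : u ≠ v) :
    (∫ x in Iio (min u v), (u - x) ^ (H - 3 / 2) * (v - x) ^ (H - 3 / 2))
      = eulerBeta (H - 1 / 2) (2 - 2 * H) * |u - v| ^ (2 * H - 2) := by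
  wlog hlt : u < v generalizing u v
  · have hvu : v < u := lt_of_le_of_ne (not_lt.mp hlt) huv.symm
    have := this v u huv.symm hvu
    rw [min_comm, abs_sub_comm] at this
    rw [← this]
    congr 1
    ext x
    ring
  rw [min_eq_left hlt.le]
  have hc : 0 < v - u := by linarith
  have key := stmt7_aux H (v - u) hH hc
  have hshift : (∫ x in Iio u, (u - x) ^ (H - 3 / 2) * (v - x) ^ (H - 3 / 2))
      = ∫ x in Iio (0:ℝ), (0 - x) ^ (H - 3 / 2) * ((v - u) - x) ^ (H - 3 / 2) := by
    have himg : (fun y : ℝ => y + u) '' Iio 0 = Iio u := by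
      ext y; constructor
      · rintro ⟨s, hs, rfl⟩; simpa using hs
      · intro hy
        exact ⟨y - u, by simpa using sub_neg.mpr (mem_Iio.mp hy), by ring⟩
    have hder : ∀ y ∈ Iio (0:ℝ), HasDerivWithinAt (fun y : ℝ => y + u) ((fun _ => (1:ℝ)) y)
        (Iio 0) y := fun y _ => ((hasDerivAt_id y).add_const u).hasDerivWithinAt
    have hinj : InjOn (fun y : ℝ => y + u) (Iio 0) := fun a _ b _ h => by simpa using h
    rw [← himg, integral_image_eq_integral_abs_deriv_smul measurableSet_Iio hder hinj]
    refine setIntegral_congr_fun measurableSet_Iio fun y _ => ?_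
    simp only [abs_one, one_smul]
    congr 1 <;> congr 1 <;> ring
  rw [hshift, key, abs_sub_comm, abs_of_pos hc]
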